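/- Let L be the normalized Laplacian of a finite weighted graph on vertex set V of size N with all degrees positive, let σ : V → V be a graph isometric transformation, and let L̃ = L − I. For a graph signal z : V → ℝ and each k, let t_k(z) = T_k(L̃)·z be the k-th Chebyshev-filtered signal, and define the statistics μ_k(z) = (1/N)·Σ_{v∈V} |t_k(z)(v)| and σ²_k(z) = (1/N)·Σ_{v∈V} (|t_k(z)(v)| − μ_k(z))². Then these statistics are invariant to graph isometric transformations of the input: μ_k(z∘σ) = μ_k(z) and σ²_k(z∘σ) = σ²_k(z) for every k and every signal z. -/

import Mathlib

/-- The degree of a vertex `v` in the weighted graph with adjacency matrix `A`. -/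
noncomputable def graphDegree {V : Type*} [Fintype V] (A : Matrix V V ℝ) (v : V) : ℝ :=
  ∑ u, A v u

/-- The normalized Laplacian of the weighted graph with adjacency matrix `A`. -/
noncomputable def normLap {V : Type*} [Fintype V] [DecidableEq V] (A : Matrix V V ℝ) :
    Matrix V V ℝ :=
  Matrix.of fun u v =>
    if u = v then 1 else -A u v / Real.sqrt (graphDegree A u * graphDegree A v)

/-- The `k`-th Chebyshev filter `T_k(L̃)` with `L̃ = L − I`. -/
noncomputable def chebFilter {V : Type*} [Fintype V] [DecidableEq V]
    (A : Matrix V V ℝ) (k : ℕ) : Matrix V V ℝ :=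
  Polynomial.aeval (normLap A - 1) (Polynomial.Chebyshev.T ℝ k)

/-- Mean of the entrywise absolute values of the `k`-th Chebyshev-filtered signal. -/
noncomputable def statMean {V : Type*} [Fintype V] [DecidableEq V]
    (A : Matrix V V ℝ) (k : ℕ) (z : V → ℝ) : ℝ :=
  (1 / (Fintype.card V : ℝ)) * ∑ v, |(chebFilter A k).mulVec z v|

/-- Variance of the entrywise absolute values of the `k`-th Chebyshev-filtered signal. -/
noncomputable def statVar {V : Type*} [Fintype V] [DecidableEq V]
    (A : Matrix V V ℝ) (k : ℕ) (z : V → ℝ) : ℝ :=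
  (1 / (Fintype.card V : ℝ)) * ∑ v, (|(chebFilter A k).mulVec z v| - statMean A k z) ^ 2

lemma cheb_invariant {V : Type*} [Fintype V] [DecidableEq V]
    (A : Matrix V V ℝ) (σ : Equiv.Perm V) (hσ : ∀ u v, A (σ u) (σ v) = A u v) (k : ℕ) :
    ∀ u v, chebFilter A k (σ u) (σ v) = chebFilter A k u v := by
  have hdeg : ∀ v, graphDegree A (σ v) = graphDegree A v := by
    intro v
    unfold graphDegree
    rw [← Equiv.sum_comp σ (fun u => A (σ v) u)]
    simp [hσ]
  have hL : Matrix.reindexAlgEquiv ℝ ℝ σ (normLap A - 1) = normLap A - 1 := by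
    ext u v
    simp only [Matrix.reindexAlgEquiv_apply, Matrix.reindex_apply, Matrix.submatrix_apply,
      Matrix.sub_apply, Matrix.one_apply, normLap, Matrix.of_apply]
    have hA : A (σ.symm u) (σ.symm v) = A u v := by
      have := hσ (σ.symm u) (σ.symm v); simpa using this.symm
    have hd1 : graphDegree A (σ.symm u) = graphDegree A u := by
      have := hdeg (σ.symm u); simpa using this.symm
    have hd2 : graphDegree A (σ.symm v) = graphDegree A v := by
      have := hdeg (σ.symm v); simpa using this.symm
    by_cases h : u = v
    · simp [h]
    · have h' : ¬ σ.symm u = σ.symm v := fun hh => h (by simpa using congrArg σ hh)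
      simp [h, h', hA, hd1, hd2]
  have hC : Matrix.reindexAlgEquiv ℝ ℝ σ (chebFilter A k) = chebFilter A k := by
    unfold chebFilter
    have := Polynomial.aeval_algHom_apply (Matrix.reindexAlgEquiv ℝ ℝ σ).toAlgHom
      (normLap A - 1) (Polynomial.Chebyshev.T ℝ k)
    simp only [AlgEquiv.coe_toAlgHom] at this
    rw [← this, hL]
  intro u v
  have := congrFun (congrFun hC (σ u)) (σ v)
  simpa using this.symm

theorem statistical_layer_invariant {V : Type*} [Fintype V] [DecidableEq V]
    (A : Matrix V V ℝ)
    (hsymm : ∀ u v, A u v = A v u)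
    (hnonneg : ∀ u v, 0 ≤ A u v)
    (hdiag : ∀ v, A v v = 0)
    (hdeg : ∀ v, 0 < graphDegree A v)
    (σ : Equiv.Perm V) (hσ : ∀ u v, A (σ u) (σ v) = A u v)
    (k : ℕ) (z : V → ℝ) :
    statMean A k (z ∘ σ) = statMean A k z ∧ statVar A k (z ∘ σ) = statVar A k z := by
  have hC := cheb_invariant A σ hσ k
  have hmv : ∀ v, (chebFilter A k).mulVec (z ∘ σ) v = (chebFilter A k).mulVec z (σ v) := by
    intro v
    unfold Matrix.mulVec dotProduct
    rw [← Equiv.sum_comp σ (fun u => chebFilter A k (σ v) u * z u)]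
    simp only [Function.comp_apply, hC]
  have hmean : statMean A k (z ∘ σ) = statMean A k z := by
    unfold statMean
    congr 1
    rw [← Equiv.sum_comp σ (fun v => |(chebFilter A k).mulVec z v|)]
    exact Finset.sum_congr rfl fun v _ => by rw [hmv]
  refine ⟨hmean, ?_⟩
  unfold statVar
  rw [hmean]
  congr 1
  rw [← Equiv.sum_comp σ (fun v => (|(chebFilter A k).mulVec z v| - statMean A k z) ^ 2)]
  exact Finset.sum_congr rfl fun v _ => by rw [hmv]
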